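/- Let λ be a partition (equivalently a 1-partition) and consider the bipartition (λ, λ) of 2|λ| with the multicharge (s, s). Then the 2-symbol of (λ, λ) has both rows equal, and it is the unique 2-symbol of charge (s,s) with its underlying multiset of entries. Consequently, χ_{(λ,λ)} is alone in its Calogero–Moser family (families being determined by the multiset of symbol entries). -/

import Mathlib

open scoped BigOperators

/-- A partition: a weakly decreasing sequence of non-negative integers, eventually zero.
`part i` is the `(i+1)`-st part. -/
structure PartitionSeq where
  part : ℕ → ℕ
  antitone : ∀ i j : ℕ, i ≤ j → part j ≤ part i
  eventually_zero : ∃ N : ℕ, ∀ i : ℕ, N ≤ i → part i = 0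

/-- The Young diagram of an `l`-partition: boxes `(a, b, c)` with `a, b ≥ 1` and
`b ≤ λ^{(c)}_a`. -/
def YDiag {l : ℕ} (lam : Fin l → PartitionSeq) : Set (ℕ × ℕ × Fin l) :=
  {x | 1 ≤ x.1 ∧ 1 ≤ x.2.1 ∧ x.2.1 ≤ (lam x.2.2).part (x.1 - 1)}

/-- A box `γ` of `[λ]` is removable if `[λ] \ {γ}` is again the Young diagram of an
`l`-partition. -/
def Removable {l : ℕ} (lam : Fin l → PartitionSeq) (γ : ℕ × ℕ × Fin l) : Prop :=
  γ ∈ YDiag lam ∧ ∃ mu : Fin l → PartitionSeq, YDiag mu = YDiag lam \ {γ}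

/-- A box `γ ∉ [λ]` is addable if `[λ] ∪ {γ}` is again the Young diagram of an
`l`-partition. -/
def Addable {l : ℕ} (lam : Fin l → PartitionSeq) (γ : ℕ × ℕ × Fin l) : Prop :=
  γ ∉ YDiag lam ∧ ∃ mu : Fin l → PartitionSeq, YDiag mu = insert γ (YDiag lam)

/-- The charged content `b - a + s_c` of a box `(a, b, c)` relative to the charge `s`. -/
def content {l : ℕ} (s : Fin l → ℤ) (γ : ℕ × ℕ × Fin l) : ℤ :=
  (γ.2.1 : ℤ) - (γ.1 : ℤ) + s γ.2.2
/-- An `l`-symbol of charge `s`: an `l`-tuple of strictly increasing integer sequences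
`β_k = (β_{k,j})_{j ≤ s_k}` with `β_{k,j} = j` for `j ≪ 0`. -/
structure LSymbol (l : ℕ) (s : Fin l → ℤ) where
  β : (k : Fin l) → {j : ℤ // j ≤ s k} → ℤ
  strict : ∀ k : Fin l, StrictMono (β k)
  lower : ∀ k : Fin l, ∃ N : ℤ, ∀ j : {j : ℤ // j ≤ s k}, j.val ≤ N → β k j = j.val

section Aux

lemma key_le (s : ℤ) (f g : {j : ℤ // j ≤ s} → ℤ) (hf : StrictMono f) (hg : StrictMono g)
    (himg : ∀ x, (∃ j, g j = x) → (∃ j, f j = x)) (i : ℕ)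
    (IH : ∀ i' : ℕ, i' < i → f ⟨s - (i' : ℤ), sub_le_self _ (Nat.cast_nonneg _)⟩ = g ⟨s - (i' : ℤ), sub_le_self _ (Nat.cast_nonneg _)⟩) :
    g ⟨s - (i : ℤ), sub_le_self _ (Nat.cast_nonneg _)⟩ ≤ f ⟨s - (i : ℤ), sub_le_self _ (Nat.cast_nonneg _)⟩ := by
  obtain ⟨j, hj⟩ := himg (g ⟨s - (i : ℤ), by omega⟩) ⟨⟨s - (i : ℤ), by omega⟩, rfl⟩
  by_cases hc : j.val ≤ s - (i : ℤ)
  · calc g ⟨s - (i : ℤ), by omega⟩ = f j := hj.symm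
      _ ≤ f ⟨s - (i : ℤ), by omega⟩ := hf.monotone (by exact hc)
  · exfalso
    have hjs : j.val ≤ s := j.2
    have hlt : (s - j.val).toNat < i := by omega
    have hje : j = ⟨s - (((s - j.val).toNat : ℕ) : ℤ), by omega⟩ :=
      Subtype.ext (show j.val = s - (((s - j.val).toNat : ℕ) : ℤ) by omega)
    have h1 : f j = g j := by rw [hje]; exact IH _ hlt
    have h2 : g j = g ⟨s - (i : ℤ), by omega⟩ := by rw [← h1, hj]
    have h3 := hg.injective h2
    have h4 : j.val = s - (i : ℤ) := congrArg Subtype.val h3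
    omega

lemma key_eq (s : ℤ) (f g : {j : ℤ // j ≤ s} → ℤ) (hf : StrictMono f) (hg : StrictMono g)
    (himg : ∀ x, (∃ j, g j = x) ↔ (∃ j, f j = x)) : f = g := by
  have main : ∀ i : ℕ, f ⟨s - (i : ℤ), by omega⟩ = g ⟨s - (i : ℤ), by omega⟩ := by
    intro i
    induction i using Nat.strong_induction_on with
    | _ i IH =>
      exact le_antisymm
        (key_le s g f hg hf (fun x hx => (himg x).mpr hx) i (fun i' h => (IH i' h).symm))
        (key_le s f g hf hg (fun x hx => (himg x).mp hx) i IH)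
  funext j
  have hjs : j.val ≤ s := j.2
  have hje : j = ⟨s - (((s - j.val).toNat : ℕ) : ℤ), by omega⟩ :=
    Subtype.ext (show j.val = s - (((s - j.val).toNat : ℕ) : ℤ) by omega)
  rw [hje]; exact main _

end Aux

open Classical in
/-- the 2-symbol of a bipartition `(λ, λ)` with multicharge `(s, s)` has
both rows equal, and any 2-symbol of charge `(s, s)` with the same underlying multiset
of entries (entry multiplicities computed row by row) equals it. Hence `χ_{(λ,λ)}` is
alone in its Calogero–Moser family. -/
theorem stmt16 (s : ℤ) (lam : PartitionSeq) (S : LSymbol 2 (fun _ => s))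
    (hrel : ∀ (k : Fin 2) (i : ℕ),
      S.β k ⟨s - (i : ℤ), by omega⟩ = (lam.part i : ℤ) + s - (i : ℤ)) :
    S.β 0 = S.β 1 ∧
      ∀ T : LSymbol 2 (fun _ => s),
        (∀ x : ℤ,
          ((if ∃ j, T.β 0 j = x then 1 else 0) + (if ∃ j, T.β 1 j = x then 1 else 0) : ℕ) =
            (if ∃ j, S.β 0 j = x then 1 else 0) + (if ∃ j, S.β 1 j = x then 1 else 0)) →
        T = S := by
  have hrow : ∀ k : Fin 2, ∀ j : {j : ℤ // j ≤ s},
      S.β k j = (lam.part (s - j.val).toNat : ℤ) + j.val := by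
    intro k j
    have hjs : j.val ≤ s := j.2
    set n : ℕ := (s - j.val).toNat with hn
    have hnv : (n : ℤ) = s - j.val := by omega
    have hje : j = ⟨s - (n : ℤ), by omega⟩ :=
      Subtype.ext (show j.val = s - (n : ℤ) by omega)
    rw [hje, hrel k n]
    have hv : ((⟨s - (n : ℤ), by omega⟩ : {j : ℤ // j ≤ s}).val) = s - (n : ℤ) := rfl
    rw [hv]
    omega
  have h01 : S.β 0 = S.β 1 := by
    funext j; rw [hrow 0 j, hrow 1 j]
  refine ⟨h01, ?_⟩
  intro T hmul
  have himg : ∀ k : Fin 2, ∀ x : ℤ, (∃ j, S.β k j = x) ↔ (∃ j, T.β k j = x) := by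
    intro k x
    have h := hmul x
    have e1 : (∃ j, S.β 1 j = x) = (∃ j, S.β 0 j = x) := by rw [h01]
    rw [e1] at h
    have e2 : (∃ j, S.β k j = x) = (∃ j, S.β 0 j = x) := by
      fin_cases k
      · rfl
      · show (∃ j, S.β 1 j = x) = (∃ j, S.β 0 j = x)
        rw [h01]
    rw [e2]
    by_cases hs : ∃ j, S.β 0 j = x
    · rw [if_pos hs] at h
      have ht0 : ∃ j, T.β 0 j = x := by
        by_contra hc; rw [if_neg hc] at h; split_ifs at h <;> omega
      have ht1 : ∃ j, T.β 1 j = x := by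
        by_contra hc; rw [if_neg hc] at h; split_ifs at h <;> omega
      fin_cases k <;> simp [hs, ht0, ht1]
    · rw [if_neg hs] at h
      have ht0 : ¬ ∃ j, T.β 0 j = x := by
        intro hc; rw [if_pos hc] at h; split_ifs at h <;> omega
      have ht1 : ¬ ∃ j, T.β 1 j = x := by
        intro hc; rw [if_pos hc] at h; split_ifs at h <;> omega
      fin_cases k <;> simp [hs, ht0, ht1]
  have hbeta : T.β = S.β := by
    funext k
    exact key_eq s (T.β k) (S.β k) (T.strict k) (S.strict k) (himg k)
  cases T; cases S
  simp_all
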